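/- Let q, t ∈ ℂ with |q| < 1 and t q^k ≠ 1 for every integer k ≥ 0, and let N ∈ ℕ. Then both series below converge absolutely and (t;q)_∞ (q;q)_∞ · Σ_{r ≥ 0} q^{r(N+1)} / ((t;q)_r (q;q)_r) = Σ_{r ≥ 0} (−1)^r t^r q^{r(r−1)/2} (q;q)_{N+r} / (q;q)_r. -/

import Mathlib

open Finset

/-- Finite q-Pochhammer symbol `(a;q)_n`. -/
noncomputable def qPoch (a q : ℂ) (n : ℕ) : ℂ := ∏ i ∈ Finset.range n, (1 - a * q ^ i)

/-- Infinite q-Pochhammer symbol `(a;q)_∞`. -/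
noncomputable def qPochInf (a q : ℂ) : ℂ := ∏' i : ℕ, (1 - a * q ^ i)

namespace HeineAux

open Filter Topology Complex

lemma qPoch_succ (a q : ℂ) (n : ℕ) :
    qPoch a q (n + 1) = qPoch a q n * (1 - a * q ^ n) := Finset.prod_range_succ _ _

lemma qPoch_ne_zero {a q : ℂ} (h0 : ∀ i : ℕ, 1 - a * q ^ i ≠ 0) (n : ℕ) :
    qPoch a q n ≠ 0 :=
  Finset.prod_ne_zero_iff.mpr fun i _ => h0 i

lemma one_sub_ne_zero_of_norm_lt_one {x : ℂ} (h : ‖x‖ < 1) : 1 - x ≠ 0 := by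
  intro hx
  rw [sub_eq_zero] at hx
  rw [← hx] at h
  simp at h

lemma summable_log {q : ℂ} (hq : ‖q‖ < 1) (a : ℂ) :
    Summable fun i : ℕ => Complex.log (1 - a * q ^ i) := by
  have hgeom : Summable fun i : ℕ => (3 / 2 : ℝ) * (‖a‖ * ‖q‖ ^ i) :=
    ((summable_geometric_of_lt_one (norm_nonneg q) hq).mul_left ‖a‖).mul_left _
  apply hgeom.of_norm_bounded_eventually_nat
  have h0 : Tendsto (fun i : ℕ => ‖a‖ * ‖q‖ ^ i) atTop (𝓝 0) := by
    simpa using (tendsto_pow_atTop_nhds_zero_of_lt_one (norm_nonneg q) hq).const_mul ‖a‖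
  filter_upwards [h0.eventually_le_const (by norm_num : (0 : ℝ) < 1 / 2)] with i hi
  have hz : ‖-(a * q ^ i)‖ ≤ 1 / 2 := by
    rwa [norm_neg, norm_mul, norm_pow]
  have := Complex.norm_log_one_add_half_le_self hz
  rw [show (1 : ℂ) + -(a * q ^ i) = 1 - a * q ^ i by ring] at this
  calc ‖Complex.log (1 - a * q ^ i)‖ ≤ 3 / 2 * ‖-(a * q ^ i)‖ := this
    _ = 3 / 2 * (‖a‖ * ‖q‖ ^ i) := by rw [norm_neg, norm_mul, norm_pow]

lemma multipliable_factors {q : ℂ} (hq : ‖q‖ < 1) (a : ℂ) (h0 : ∀ i : ℕ, 1 - a * q ^ i ≠ 0) :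
    Multipliable fun i : ℕ => 1 - a * q ^ i :=
by
  have h := Complex.multipliable_of_summable_log (summable_log hq a)
  exact h

lemma qPochInf_ne_zero {q : ℂ} (hq : ‖q‖ < 1) (a : ℂ) (h0 : ∀ i : ℕ, 1 - a * q ^ i ≠ 0) :
    qPochInf a q ≠ 0 := by
  have h2 := Complex.cexp_tsum_eq_tprod (f := fun i : ℕ => 1 - a * q ^ i) h0 (summable_log hq a)
  rw [qPochInf, ← h2]
  exact Complex.exp_ne_zero _

lemma tendsto_qPoch {q : ℂ} (hq : ‖q‖ < 1) (a : ℂ) (h0 : ∀ i : ℕ, 1 - a * q ^ i ≠ 0) :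
    Tendsto (fun n => qPoch a q n) atTop (𝓝 (qPochInf a q)) := by
  have h := (multipliable_factors hq a h0).hasProd.tendsto_prod_nat
  simpa only [qPoch, qPochInf] using h

lemma qPochInf_split {q : ℂ} (hq : ‖q‖ < 1) (a : ℂ) (h0 : ∀ i : ℕ, 1 - a * q ^ i ≠ 0) (n : ℕ) :
    qPochInf a q = qPoch a q n * qPochInf (a * q ^ n) q := by
  have hm : Multipliable fun i : ℕ => 1 - a * q ^ n * q ^ i :=
    multipliable_factors hq (a * q ^ n)
      (fun i => by rw [mul_assoc, ← pow_add]; exact h0 (n + i))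
  have hm' : Multipliable fun i : ℕ => 1 - a * q ^ (i + n) :=
    hm.congr fun i => by rw [mul_assoc, ← pow_add, add_comm n i]
  have h := Multipliable.prod_mul_tprod_nat_mul' (f := fun i : ℕ => 1 - a * q ^ i) (k := n) hm'
  rw [qPochInf, ← h, qPoch]
  congr 1
  rw [qPochInf]
  apply tprod_congr
  intro i
  rw [mul_assoc, ← pow_add, add_comm n i]

lemma exists_le_of_tendsto {u : ℕ → ℝ} {L : ℝ} (h : Tendsto u atTop (𝓝 L)) :
    ∃ C, ∀ n, u n ≤ C := by
  obtain ⟨N, hN⟩ := Filter.eventually_atTop.1 (h.eventually_le_const (lt_add_one L))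
  refine ⟨max (L + 1) ((Finset.range (N + 1)).sup' ⟨0, by simp⟩ u), fun n => ?_⟩
  rcases le_or_gt N n with hn | hn
  · exact le_max_of_le_left (hN n hn)
  · exact le_max_of_le_right (Finset.le_sup' u (by simp [Finset.mem_range]; omega))

lemma exists_pos_le_of_tendsto {u : ℕ → ℝ} {L : ℝ} (h : Tendsto u atTop (𝓝 L))
    (hL : 0 < L) (hu : ∀ n, 0 < u n) : ∃ ε > 0, ∀ n, ε ≤ u n := by
  obtain ⟨N, hN⟩ := Filter.eventually_atTop.1 (h.eventually_const_le (half_lt_self hL))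
  refine ⟨min (L / 2) ((Finset.range (N + 1)).inf' ⟨0, by simp⟩ u), ?_, fun n => ?_⟩
  · apply lt_min (half_pos hL)
    exact (Finset.lt_inf'_iff _).2 fun i _ => hu i
  · rcases le_or_gt N n with hn | hn
    · exact le_trans (min_le_left _ _) (hN n hn)
    · exact le_trans (min_le_right _ _) (Finset.inf'_le u (by simp [Finset.mem_range]; omega))

lemma qPoch_bounds {q : ℂ} (hq : ‖q‖ < 1) (a : ℂ) (h0 : ∀ i : ℕ, 1 - a * q ^ i ≠ 0) :
    ∃ C ε : ℝ, 0 < ε ∧ (∀ n, ‖qPoch a q n‖ ≤ C) ∧ ∀ n, ε ≤ ‖qPoch a q n‖ := by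
  have htd := (tendsto_qPoch hq a h0).norm
  obtain ⟨C, hC⟩ := exists_le_of_tendsto htd
  obtain ⟨ε, hε, hεle⟩ := exists_pos_le_of_tendsto htd
    (norm_pos_iff.2 (qPochInf_ne_zero hq a h0))
    (fun n => norm_pos_iff.2 (qPoch_ne_zero h0 n))
  exact ⟨C, ε, hε, hC, hεle⟩

lemma E_succ (r : ℕ) : (r + 1) * ((r + 1) - 1) / 2 = r * (r - 1) / 2 + r := by
  rw [← Finset.sum_range_id, ← Finset.sum_range_id, Finset.sum_range_succ]

lemma summable_base {c : ℝ} (h0 : 0 ≤ c) (h1 : c < 1) {M : ℝ} (hM : 0 ≤ M) :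
    Summable fun r : ℕ => c ^ (r * (r - 1) / 2) * M ^ r := by
  obtain ⟨R, hR⟩ : ∃ R : ℕ, c ^ R * M < 1 / 2 := by
    have h2 := (tendsto_pow_atTop_nhds_zero_of_lt_one h0 h1).mul_const M
    rw [zero_mul] at h2
    exact (h2.eventually_lt_const (by norm_num : (0 : ℝ) < 1 / 2)).exists
  apply Summable.of_norm_bounded_eventually_nat (g := fun r => (1 / 2 : ℝ) ^ r)
    (summable_geometric_of_lt_one (by norm_num) (by norm_num))
  filter_upwards [Filter.eventually_atTop.2 ⟨2 * R + 1, fun r hr => hr⟩] with r hr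
  have hE : r * R ≤ r * (r - 1) / 2 := by
    rw [Nat.le_div_iff_mul_le (by norm_num : 0 < 2)]
    calc r * R * 2 = r * (2 * R) := by ring
      _ ≤ r * (r - 1) := Nat.mul_le_mul_left r (by omega)
  have hc1 : c ^ (r * (r - 1) / 2) ≤ (c ^ R) ^ r := by
    rw [← pow_mul, mul_comm R r]
    exact pow_le_pow_of_le_one h0 h1.le hE
  have hb : c ^ (r * (r - 1) / 2) * M ^ r ≤ (1 / 2) ^ r := by
    calc c ^ (r * (r - 1) / 2) * M ^ r ≤ (c ^ R) ^ r * M ^ r :=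
          mul_le_mul_of_nonneg_right hc1 (pow_nonneg hM r)
      _ = (c ^ R * M) ^ r := (mul_pow _ _ _).symm
      _ ≤ (1 / 2) ^ r := pow_le_pow_left₀ (mul_nonneg (pow_nonneg h0 R) hM) hR.le r
  rw [Real.norm_of_nonneg (mul_nonneg (pow_nonneg h0 _) (pow_nonneg hM _))]
  exact hb

lemma hq_factors {q : ℂ} (hq : ‖q‖ < 1) : ∀ i : ℕ, 1 - q * q ^ i ≠ 0 := by
  intro i
  apply one_sub_ne_zero_of_norm_lt_one
  rw [norm_mul, norm_pow]
  calc ‖q‖ * ‖q‖ ^ i ≤ ‖q‖ * 1 := by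
        gcongr
        exact pow_le_one₀ (norm_nonneg q) hq.le
    _ = ‖q‖ := mul_one _
    _ < 1 := hq

lemma summable_euler1 {q : ℂ} {ε : ℝ} (hε : 0 < ε)
    (hb : ∀ n, ε ≤ ‖qPoch q q n‖) {w : ℂ} (hw : ‖w‖ < 1) :
    Summable fun r : ℕ => w ^ r / qPoch q q r := by
  apply Summable.of_norm_bounded (g := fun r => ε⁻¹ * ‖w‖ ^ r)
    ((summable_geometric_of_lt_one (norm_nonneg w) hw).mul_left _)
  intro r
  rw [norm_div, norm_pow, div_eq_mul_inv, mul_comm]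
  gcongr
  exact hb r

set_option maxHeartbeats 1600000 in
lemma euler1_feq {q : ℂ} (hq : ‖q‖ < 1) {w : ℂ} (hw : ‖w‖ < 1) :
    ∑' r : ℕ, (q * w) ^ r / qPoch q q r = (1 - w) * ∑' r : ℕ, w ^ r / qPoch q q r := by
  obtain ⟨C, ε, hε, hC, hb⟩ := qPoch_bounds hq q (hq_factors hq)
  have hPne := qPoch_ne_zero (hq_factors hq)
  have hqw : ‖q * w‖ < 1 := by
    rw [norm_mul]
    simpa using mul_lt_mul' hq.le hw (norm_nonneg w) one_pos
  have h1 : Summable fun r : ℕ => w ^ r / qPoch q q r := summable_euler1 hε hb hw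
  have h1' : Summable fun r : ℕ => (q * w) ^ r / qPoch q q r := summable_euler1 hε hb hqw
  have h2 : Summable fun r : ℕ => w ^ (r + 1) / qPoch q q (r + 1) := (summable_nat_add_iff 1).2 h1
  have h3 : Summable fun r : ℕ => w * (w ^ r / qPoch q q r) := h1.mul_left w
  have hterm : ∀ r : ℕ, w ^ (r + 1) / qPoch q q (r + 1) - w * (w ^ r / qPoch q q r)
      = (q * w) ^ (r + 1) / qPoch q q (r + 1) := by
    intro r
    rw [qPoch_succ]
    have hA := hPne r
    have hB : 1 - q * q ^ r ≠ 0 := hq_factors hq r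
    field_simp
    ring
  calc ∑' r : ℕ, (q * w) ^ r / qPoch q q r
      = (q * w) ^ 0 / qPoch q q 0 + ∑' r : ℕ, (q * w) ^ (r + 1) / qPoch q q (r + 1) :=
        Summable.tsum_eq_zero_add h1'
    _ = 1 + ∑' r : ℕ, (w ^ (r + 1) / qPoch q q (r + 1) - w * (w ^ r / qPoch q q r)) := by
        congr 1
        · simp [qPoch]
        · exact (tsum_congr fun r => (hterm r).symm)
    _ = 1 + ((∑' r : ℕ, w ^ (r + 1) / qPoch q q (r + 1))
          - ∑' r : ℕ, w * (w ^ r / qPoch q q r)) := by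
        rw [Summable.tsum_sub h2 h3]
    _ = (w ^ 0 / qPoch q q 0 + ∑' r : ℕ, w ^ (r + 1) / qPoch q q (r + 1))
          - w * ∑' r : ℕ, w ^ r / qPoch q q r := by
        rw [tsum_mul_left]
        simp [qPoch]
        ring
    _ = (1 - w) * ∑' r : ℕ, w ^ r / qPoch q q r := by
        rw [← Summable.tsum_eq_zero_add h1]
        ring

lemma euler1 {q : ℂ} (hq : ‖q‖ < 1) {z : ℂ} (hz : ‖z‖ < 1) :
    Summable (fun r : ℕ => z ^ r / qPoch q q r) ∧
      qPochInf z q * ∑' r : ℕ, z ^ r / qPoch q q r = 1 := by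
  obtain ⟨C, ε, hε, hC, hb⟩ := qPoch_bounds hq q (hq_factors hq)
  have hpow1 : ∀ n : ℕ, ‖q‖ ^ n ≤ 1 := fun n => pow_le_one₀ (norm_nonneg q) hq.le
  have hzn : ∀ n : ℕ, ‖q ^ n * z‖ < 1 := by
    intro n
    rw [norm_mul, norm_pow]
    calc ‖q‖ ^ n * ‖z‖ ≤ 1 * ‖z‖ := by gcongr; exact hpow1 n
      _ = ‖z‖ := one_mul _
      _ < 1 := hz
  have h0z : ∀ i : ℕ, 1 - z * q ^ i ≠ 0 := by
    intro i
    apply one_sub_ne_zero_of_norm_lt_one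
    rw [norm_mul, norm_pow]
    calc ‖z‖ * ‖q‖ ^ i ≤ ‖z‖ * 1 := by gcongr; exact hpow1 i
      _ = ‖z‖ := mul_one _
      _ < 1 := hz
  refine ⟨summable_euler1 hε hb hz, ?_⟩
  have iter : ∀ n : ℕ, ∑' r : ℕ, (q ^ n * z) ^ r / qPoch q q r
      = qPoch z q n * ∑' r : ℕ, z ^ r / qPoch q q r := by
    intro n
    induction n with
    | zero => simp [qPoch]
    | succ n ih =>
      rw [show q ^ (n + 1) * z = q * (q ^ n * z) by ring, euler1_feq hq (hzn n), ih, qPoch_succ]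
      ring
  have hlim2 : Tendsto (fun n : ℕ => ∑' r : ℕ, (q ^ n * z) ^ r / qPoch q q r) atTop (𝓝 1) := by
    have hdom := tendsto_tsum_of_dominated_convergence (𝓕 := atTop)
      (f := fun (n : ℕ) (r : ℕ) => (q ^ n * z) ^ r / qPoch q q r)
      (g := fun r : ℕ => if r = 0 then (1 : ℂ) else 0)
      (bound := fun r : ℕ => ε⁻¹ * ‖z‖ ^ r)
      ((summable_geometric_of_lt_one (norm_nonneg z) hz).mul_left _) ?_ ?_
    · simpa using hdom
    · intro r
      rcases Nat.eq_zero_or_pos r with hr | hr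
      · subst hr; simpa [qPoch] using (tendsto_const_nhds :
          Tendsto (fun _ : ℕ => (1 : ℂ)) atTop (𝓝 1))
      · have hqr : ‖q ^ r‖ < 1 := by
          rw [norm_pow]
          exact pow_lt_one₀ (norm_nonneg q) hq (by omega)
        have hmain : Tendsto (fun n : ℕ => ((q ^ r) ^ n) * (z ^ r / qPoch q q r)) atTop (𝓝 0) := by
          simpa using (tendsto_pow_atTop_nhds_zero_of_norm_lt_one hqr).mul_const
            (z ^ r / qPoch q q r)
        have hfun : (fun n : ℕ => (q ^ n * z) ^ r / qPoch q q r)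
            = fun n : ℕ => ((q ^ r) ^ n) * (z ^ r / qPoch q q r) := by
          funext n
          rw [mul_pow, ← pow_mul, mul_comm n r, pow_mul]
          ring
        show Tendsto (fun n : ℕ => (q ^ n * z) ^ r / qPoch q q r) atTop
          (𝓝 (if r = 0 then (1 : ℂ) else 0))
        rw [if_neg (by omega : ¬ r = 0), hfun]
        exact hmain
    · filter_upwards with n r
      rw [norm_div, norm_pow, norm_mul, norm_pow]
      calc (‖q‖ ^ n * ‖z‖) ^ r / ‖qPoch q q r‖ ≤ (1 * ‖z‖) ^ r / ε := by
            gcongr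
            · exact hpow1 n
            · exact hb r
        _ = ε⁻¹ * ‖z‖ ^ r := by rw [one_mul, div_eq_mul_inv, mul_comm]
  simp only [iter] at hlim2
  exact (tendsto_nhds_unique hlim2 ((tendsto_qPoch hq z h0z).mul_const _)).symm

lemma summable_euler2 {q : ℂ} (hq : ‖q‖ < 1) {ε : ℝ} (hε : 0 < ε)
    (hb : ∀ n, ε ≤ ‖qPoch q q n‖) (w : ℂ) :
    Summable fun r : ℕ => (-1 : ℂ) ^ r * q ^ (r * (r - 1) / 2) * w ^ r / qPoch q q r := by
  apply Summable.of_norm_bounded (g := fun r => ε⁻¹ * (‖q‖ ^ (r * (r - 1) / 2) * ‖w‖ ^ r))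
    ((summable_base (norm_nonneg q) hq (norm_nonneg w)).mul_left _)
  intro r
  rw [norm_div, norm_mul, norm_mul, norm_pow, norm_pow, norm_pow, norm_neg, norm_one,
    one_pow, one_mul, div_eq_mul_inv, mul_comm]
  gcongr
  exact hb r

set_option maxHeartbeats 1600000 in
lemma euler2_feq {q : ℂ} (hq : ‖q‖ < 1) {ε : ℝ} (hε : 0 < ε)
    (hb : ∀ n, ε ≤ ‖qPoch q q n‖) (w : ℂ) :
    ∑' r : ℕ, (-1 : ℂ) ^ r * q ^ (r * (r - 1) / 2) * w ^ r / qPoch q q r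
      = (1 - w) * ∑' r : ℕ, (-1 : ℂ) ^ r * q ^ (r * (r - 1) / 2) * (q * w) ^ r / qPoch q q r := by
  have hPne := qPoch_ne_zero (hq_factors hq)
  have hg : Summable fun r : ℕ => (-1 : ℂ) ^ r * q ^ (r * (r - 1) / 2) * w ^ r / qPoch q q r :=
    summable_euler2 hq hε hb w
  have hh : Summable fun r : ℕ =>
      (-1 : ℂ) ^ r * q ^ (r * (r - 1) / 2) * (q * w) ^ r / qPoch q q r :=
    summable_euler2 hq hε hb (q * w)
  have hh1 : Summable fun r : ℕ =>
      (-1 : ℂ) ^ (r + 1) * q ^ ((r + 1) * ((r + 1) - 1) / 2) * (q * w) ^ (r + 1)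
        / qPoch q q (r + 1) := (summable_nat_add_iff 1).2 hh
  have hh2 : Summable fun r : ℕ =>
      w * ((-1 : ℂ) ^ r * q ^ (r * (r - 1) / 2) * (q * w) ^ r / qPoch q q r) := hh.mul_left w
  have hterm : ∀ r : ℕ,
      (-1 : ℂ) ^ (r + 1) * q ^ ((r + 1) * ((r + 1) - 1) / 2) * (q * w) ^ (r + 1)
          / qPoch q q (r + 1)
        - w * ((-1 : ℂ) ^ r * q ^ (r * (r - 1) / 2) * (q * w) ^ r / qPoch q q r)
      = (-1 : ℂ) ^ (r + 1) * q ^ ((r + 1) * ((r + 1) - 1) / 2) * w ^ (r + 1)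
          / qPoch q q (r + 1) := by
    intro r
    rw [E_succ r, pow_add, qPoch_succ]
    have hA := hPne r
    have hB : 1 - q * q ^ r ≠ 0 := hq_factors hq r
    field_simp
    ring
  calc ∑' r : ℕ, (-1 : ℂ) ^ r * q ^ (r * (r - 1) / 2) * w ^ r / qPoch q q r
      = (-1 : ℂ) ^ 0 * q ^ (0 * (0 - 1) / 2) * w ^ 0 / qPoch q q 0
          + ∑' r : ℕ, (-1 : ℂ) ^ (r + 1) * q ^ ((r + 1) * ((r + 1) - 1) / 2) * w ^ (r + 1)
            / qPoch q q (r + 1) := Summable.tsum_eq_zero_add hg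
    _ = 1 + ∑' r : ℕ,
          ((-1 : ℂ) ^ (r + 1) * q ^ ((r + 1) * ((r + 1) - 1) / 2) * (q * w) ^ (r + 1)
              / qPoch q q (r + 1)
            - w * ((-1 : ℂ) ^ r * q ^ (r * (r - 1) / 2) * (q * w) ^ r / qPoch q q r)) := by
        congr 1
        · simp [qPoch]
        · exact tsum_congr fun r => (hterm r).symm
    _ = 1 + ((∑' r : ℕ, (-1 : ℂ) ^ (r + 1) * q ^ ((r + 1) * ((r + 1) - 1) / 2) * (q * w) ^ (r + 1)
              / qPoch q q (r + 1))
          - ∑' r : ℕ, w * ((-1 : ℂ) ^ r * q ^ (r * (r - 1) / 2) * (q * w) ^ r / qPoch q q r)) := by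
        rw [Summable.tsum_sub hh1 hh2]
    _ = ((-1 : ℂ) ^ 0 * q ^ (0 * (0 - 1) / 2) * (q * w) ^ 0 / qPoch q q 0
          + ∑' r : ℕ, (-1 : ℂ) ^ (r + 1) * q ^ ((r + 1) * ((r + 1) - 1) / 2) * (q * w) ^ (r + 1)
            / qPoch q q (r + 1))
          - w * ∑' r : ℕ, (-1 : ℂ) ^ r * q ^ (r * (r - 1) / 2) * (q * w) ^ r / qPoch q q r := by
        rw [tsum_mul_left]
        simp [qPoch]
        ring
    _ = (1 - w) * ∑' r : ℕ, (-1 : ℂ) ^ r * q ^ (r * (r - 1) / 2) * (q * w) ^ r / qPoch q q r := by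
        rw [← Summable.tsum_eq_zero_add hh]
        ring

set_option maxHeartbeats 1600000 in
lemma euler2 {q : ℂ} (hq : ‖q‖ < 1) {w : ℂ} (h0w : ∀ i : ℕ, 1 - w * q ^ i ≠ 0) :
    Summable (fun r : ℕ => (-1 : ℂ) ^ r * q ^ (r * (r - 1) / 2) * w ^ r / qPoch q q r) ∧
      qPochInf w q = ∑' r : ℕ, (-1 : ℂ) ^ r * q ^ (r * (r - 1) / 2) * w ^ r / qPoch q q r := by
  obtain ⟨C, ε, hε, hC, hb⟩ := qPoch_bounds hq q (hq_factors hq)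
  have hpow1 : ∀ n : ℕ, ‖q‖ ^ n ≤ 1 := fun n => pow_le_one₀ (norm_nonneg q) hq.le
  refine ⟨summable_euler2 hq hε hb w, ?_⟩
  have iter : ∀ n : ℕ,
      ∑' r : ℕ, (-1 : ℂ) ^ r * q ^ (r * (r - 1) / 2) * w ^ r / qPoch q q r
        = qPoch w q n * ∑' r : ℕ, (-1 : ℂ) ^ r * q ^ (r * (r - 1) / 2) * (q ^ n * w) ^ r
            / qPoch q q r := by
    intro n
    induction n with
    | zero => simp [qPoch]
    | succ n ih =>
      rw [ih, euler2_feq hq hε hb (q ^ n * w),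
        show q * (q ^ n * w) = q ^ (n + 1) * w by ring, qPoch_succ]
      ring
  have hlim2 : Tendsto (fun n : ℕ =>
      ∑' r : ℕ, (-1 : ℂ) ^ r * q ^ (r * (r - 1) / 2) * (q ^ n * w) ^ r / qPoch q q r)
      atTop (𝓝 1) := by
    have hdom := tendsto_tsum_of_dominated_convergence (𝓕 := (atTop : Filter ℕ))
      (f := fun (n : ℕ) (r : ℕ) =>
        (-1 : ℂ) ^ r * q ^ (r * (r - 1) / 2) * (q ^ n * w) ^ r / qPoch q q r)
      (g := fun r : ℕ => if r = 0 then (1 : ℂ) else 0)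
      (bound := fun r : ℕ => ε⁻¹ * (‖q‖ ^ (r * (r - 1) / 2) * ‖w‖ ^ r))
      ((summable_base (norm_nonneg q) hq (norm_nonneg w)).mul_left _) ?_ ?_
    · simpa using hdom
    · intro r
      rcases Nat.eq_zero_or_pos r with hr | hr
      · subst hr
        simpa [qPoch] using (tendsto_const_nhds :
          Tendsto (fun _ : ℕ => (1 : ℂ)) atTop (𝓝 1))
      · have hqr : ‖q ^ r‖ < 1 := by
          rw [norm_pow]
          exact pow_lt_one₀ (norm_nonneg q) hq (by omega)
        have hmain : Tendsto (fun n : ℕ =>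
            ((q ^ r) ^ n) * ((-1 : ℂ) ^ r * q ^ (r * (r - 1) / 2) * w ^ r / qPoch q q r))
            atTop (𝓝 0) := by
          simpa using (tendsto_pow_atTop_nhds_zero_of_norm_lt_one hqr).mul_const
            ((-1 : ℂ) ^ r * q ^ (r * (r - 1) / 2) * w ^ r / qPoch q q r)
        have hfun : (fun n : ℕ =>
              (-1 : ℂ) ^ r * q ^ (r * (r - 1) / 2) * (q ^ n * w) ^ r / qPoch q q r)
            = fun n : ℕ =>
              ((q ^ r) ^ n) * ((-1 : ℂ) ^ r * q ^ (r * (r - 1) / 2) * w ^ r / qPoch q q r) := by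
          funext n
          rw [mul_pow, ← pow_mul, mul_comm n r, pow_mul]
          ring
        show Tendsto (fun n : ℕ =>
            (-1 : ℂ) ^ r * q ^ (r * (r - 1) / 2) * (q ^ n * w) ^ r / qPoch q q r) atTop
          (𝓝 (if r = 0 then (1 : ℂ) else 0))
        rw [if_neg (by omega : ¬ r = 0), hfun]
        exact hmain
    · filter_upwards with n r
      simp only [norm_div, norm_mul, norm_pow, norm_neg, norm_one, one_pow, one_mul]
      calc ‖q‖ ^ (r * (r - 1) / 2) * (‖q‖ ^ n * ‖w‖) ^ r / ‖qPoch q q r‖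
          ≤ ‖q‖ ^ (r * (r - 1) / 2) * (1 * ‖w‖) ^ r / ε := by
            gcongr
            · exact hpow1 n
            · exact hb r
        _ = ε⁻¹ * (‖q‖ ^ (r * (r - 1) / 2) * ‖w‖ ^ r) := by
            rw [one_mul, div_eq_mul_inv]
            ring
  have hmul : Tendsto (fun n : ℕ => qPoch w q n *
      ∑' r : ℕ, (-1 : ℂ) ^ r * q ^ (r * (r - 1) / 2) * (q ^ n * w) ^ r / qPoch q q r)
      atTop (𝓝 (qPochInf w q * 1)) := (tendsto_qPoch hq w h0w).mul hlim2
  simp only [← iter] at hmul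
  have := tendsto_nhds_unique tendsto_const_nhds hmul
  rw [mul_one] at this
  exact this.symm

end HeineAux

open HeineAux Filter Topology Complex in
set_option maxHeartbeats 1600000 in
/-- The transformation of the `r`-sums used in Section 5 (with `N = s_{i-1} + s_i`),
derived from Heine's first transformation of ₂φ₁ series by a limiting argument.
Summability of a complex-valued family is absolute convergence. -/
theorem heine_r_sum_transformation (q t : ℂ)
    (hq : ‖q‖ < 1) (ht : ∀ k : ℕ, t * q ^ k ≠ 1) (N : ℕ) :
    Summable (fun r : ℕ => q ^ (r * (N + 1)) / (qPoch t q r * qPoch q q r)) ∧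
    Summable (fun r : ℕ =>
      (-1 : ℂ) ^ r * t ^ r * q ^ (r * (r - 1) / 2) * qPoch q q (N + r) / qPoch q q r) ∧
    qPochInf t q * qPochInf q q *
        ∑' r : ℕ, q ^ (r * (N + 1)) / (qPoch t q r * qPoch q q r) =
      ∑' r : ℕ,
        (-1 : ℂ) ^ r * t ^ r * q ^ (r * (r - 1) / 2) * qPoch q q (N + r) / qPoch q q r := by
  have hq' : ‖q‖ < 1 := by exact hq
  have h0q := hq_factors hq'
  have h0t : ∀ i : ℕ, 1 - t * q ^ i ≠ 0 := fun i => sub_ne_zero_of_ne (Ne.symm (ht i))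
  have h0tr : ∀ r i : ℕ, 1 - t * q ^ r * q ^ i ≠ 0 := fun r i => by
    rw [mul_assoc, ← pow_add]; exact h0t (r + i)
  have hTne := qPoch_ne_zero h0t
  have hPne := qPoch_ne_zero h0q
  obtain ⟨Cq, εq, hεq, hCq, hbq⟩ := qPoch_bounds hq' q h0q
  obtain ⟨Ct, εt, hεt, hCt, hbt⟩ := qPoch_bounds hq' t h0t
  have hpow1 : ∀ n : ℕ, ‖q‖ ^ n ≤ 1 := fun n => pow_le_one₀ (norm_nonneg q) hq'.le
  have hA : Summable (fun r : ℕ => q ^ (r * (N + 1)) / (qPoch t q r * qPoch q q r)) := by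
    apply Summable.of_norm_bounded (g := fun r => (εt * εq)⁻¹ * ‖q‖ ^ r)
      ((summable_geometric_of_lt_one (norm_nonneg q) hq').mul_left _)
    intro r
    rw [norm_div, norm_pow, norm_mul]
    calc ‖q‖ ^ (r * (N + 1)) / (‖qPoch t q r‖ * ‖qPoch q q r‖)
        ≤ ‖q‖ ^ r / (εt * εq) :=
          div_le_div₀ (pow_nonneg (norm_nonneg q) r)
            (pow_le_pow_of_le_one (norm_nonneg q) hq'.le
              (Nat.le_mul_of_pos_right r (by omega : 0 < N + 1)))
            (mul_pos hεt hεq)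
            (mul_le_mul (hbt r) (hbq r) hεq.le (norm_nonneg _))
      _ = (εt * εq)⁻¹ * ‖q‖ ^ r := by rw [div_eq_mul_inv, mul_comm]
  have hB : Summable (fun r : ℕ =>
      (-1 : ℂ) ^ r * t ^ r * q ^ (r * (r - 1) / 2) * qPoch q q (N + r) / qPoch q q r) := by
    apply Summable.of_norm_bounded (g := fun r => Cq * εq⁻¹ * (‖q‖ ^ (r * (r - 1) / 2) * ‖t‖ ^ r))
      ((summable_base (norm_nonneg q) hq' (norm_nonneg t)).mul_left _)
    intro r
    simp only [norm_div, norm_mul, norm_pow, norm_neg, norm_one, one_pow, one_mul]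
    calc ‖t‖ ^ r * ‖q‖ ^ (r * (r - 1) / 2) * ‖qPoch q q (N + r)‖ / ‖qPoch q q r‖
        ≤ ‖t‖ ^ r * ‖q‖ ^ (r * (r - 1) / 2) * Cq / εq :=
          div_le_div₀
            (mul_nonneg (by positivity) (le_trans (norm_nonneg _) (hCq 0)))
            (mul_le_mul_of_nonneg_left (hCq (N + r)) (by positivity))
            hεq (hbq r)
      _ = Cq * εq⁻¹ * (‖q‖ ^ (r * (r - 1) / 2) * ‖t‖ ^ r) := by
          rw [div_eq_mul_inv]; ring
  refine ⟨hA, hB, ?_⟩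
  set F : ℕ × ℕ → ℂ := fun p =>
    (q ^ (p.1 * (N + 1)) / qPoch q q p.1) *
      ((-1 : ℂ) ^ p.2 * q ^ (p.2 * (p.2 - 1) / 2) * (t * q ^ p.1) ^ p.2 / qPoch q q p.2)
    with hFdef
  have hFsum : Summable F := by
    apply Summable.of_norm_bounded
      (g := fun p : ℕ × ℕ => (εq⁻¹ * ‖q‖ ^ p.1) * (εq⁻¹ * (‖q‖ ^ (p.2 * (p.2 - 1) / 2) * ‖t‖ ^ p.2)))
      (Summable.mul_of_nonneg
        ((summable_geometric_of_lt_one (norm_nonneg q) hq').mul_left _)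
        ((summable_base (norm_nonneg q) hq' (norm_nonneg t)).mul_left _)
        (fun r => by positivity) (fun s => by positivity))
    rintro ⟨r, s⟩
    simp only [hFdef, norm_mul, norm_div, norm_pow, norm_neg, norm_one, one_pow, one_mul]
    have h1 : ‖q‖ ^ (r * (N + 1)) / ‖qPoch q q r‖ ≤ εq⁻¹ * ‖q‖ ^ r := by
      calc ‖q‖ ^ (r * (N + 1)) / ‖qPoch q q r‖ ≤ ‖q‖ ^ r / εq :=
            div_le_div₀ (pow_nonneg (norm_nonneg q) r)
              (pow_le_pow_of_le_one (norm_nonneg q) hq'.le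
                (Nat.le_mul_of_pos_right r (by omega : 0 < N + 1)))
              hεq (hbq r)
        _ = εq⁻¹ * ‖q‖ ^ r := by rw [div_eq_mul_inv, mul_comm]
    have h2 : ‖q‖ ^ (s * (s - 1) / 2) * (‖t‖ * ‖q‖ ^ r) ^ s / ‖qPoch q q s‖
        ≤ εq⁻¹ * (‖q‖ ^ (s * (s - 1) / 2) * ‖t‖ ^ s) := by
      have e1 : (‖t‖ * ‖q‖ ^ r) ^ s ≤ ‖t‖ ^ s := by
        apply pow_le_pow_left₀ (by positivity)
        calc ‖t‖ * ‖q‖ ^ r ≤ ‖t‖ * 1 := by gcongr; exact hpow1 r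
          _ = ‖t‖ := mul_one _
      calc ‖q‖ ^ (s * (s - 1) / 2) * (‖t‖ * ‖q‖ ^ r) ^ s / ‖qPoch q q s‖
          ≤ ‖q‖ ^ (s * (s - 1) / 2) * ‖t‖ ^ s / εq :=
            div_le_div₀ (by positivity)
              (mul_le_mul_of_nonneg_left e1 (by positivity))
              hεq (hbq s)
        _ = εq⁻¹ * (‖q‖ ^ (s * (s - 1) / 2) * ‖t‖ ^ s) := by
            rw [div_eq_mul_inv, mul_comm]
    exact mul_le_mul h1 h2 (by positivity) (by positivity)
  have hsplitF : ∀ r : ℕ,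
      qPochInf t q * (q ^ (r * (N + 1)) / (qPoch t q r * qPoch q q r)) = ∑' s : ℕ, F (r, s) := by
    intro r
    have e2 := (euler2 hq' (fun i => h0tr r i)).2
    calc qPochInf t q * (q ^ (r * (N + 1)) / (qPoch t q r * qPoch q q r))
        = (q ^ (r * (N + 1)) / qPoch q q r) * qPochInf (t * q ^ r) q := by
          rw [qPochInf_split hq' t h0t r]
          have := hTne r
          have := hPne r
          field_simp
      _ = (q ^ (r * (N + 1)) / qPoch q q r) *
            ∑' s : ℕ, (-1 : ℂ) ^ s * q ^ (s * (s - 1) / 2) * (t * q ^ r) ^ s / qPoch q q s := by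
          rw [← e2]
      _ = ∑' s : ℕ, F (r, s) := by
          rw [← tsum_mul_left]
  have hcol : ∀ s : ℕ, qPochInf q q * (∑' r : ℕ, F (r, s))
      = (-1 : ℂ) ^ s * t ^ s * q ^ (s * (s - 1) / 2) * qPoch q q (N + s) / qPoch q q s := by
    intro s
    have hz : ‖q ^ (N + 1 + s)‖ < 1 := by
      rw [norm_pow]
      calc ‖q‖ ^ (N + 1 + s) ≤ ‖q‖ ^ 1 :=
            pow_le_pow_of_le_one (norm_nonneg q) hq'.le (by omega)
        _ = ‖q‖ := pow_one _
        _ < 1 := hq'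
    have he1 := (euler1 hq' hz).2
    have hFrs : ∀ r : ℕ, F (r, s)
        = ((-1 : ℂ) ^ s * q ^ (s * (s - 1) / 2) * t ^ s / qPoch q q s) *
            ((q ^ (N + 1 + s)) ^ r / qPoch q q r) := by
      intro r
      have e3 : ((q : ℂ) ^ (N + 1 + s)) ^ r = q ^ (r * (N + 1)) * q ^ (r * s) := by
        rw [← pow_mul, ← pow_add]
        congr 1
        ring
      have e4 : (t * q ^ r) ^ s = t ^ s * q ^ (r * s) := by
        rw [mul_pow, ← pow_mul]
      rw [hFdef]
      simp only []
      rw [e3, e4]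
      ring
    calc qPochInf q q * (∑' r : ℕ, F (r, s))
        = qPochInf q q * (((-1 : ℂ) ^ s * q ^ (s * (s - 1) / 2) * t ^ s / qPoch q q s) *
            ∑' r : ℕ, (q ^ (N + 1 + s)) ^ r / qPoch q q r) := by
          rw [tsum_congr hFrs, tsum_mul_left]
      _ = ((-1 : ℂ) ^ s * q ^ (s * (s - 1) / 2) * t ^ s / qPoch q q s) *
            (qPoch q q (N + s) *
              (qPochInf (q ^ (N + 1 + s)) q * ∑' r : ℕ, (q ^ (N + 1 + s)) ^ r / qPoch q q r)) := by
          rw [qPochInf_split hq' q h0q (N + s),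
            show q * q ^ (N + s) = q ^ (N + 1 + s) by rw [← pow_succ']; congr 1; omega]
          ring
      _ = (-1 : ℂ) ^ s * t ^ s * q ^ (s * (s - 1) / 2) * qPoch q q (N + s) / qPoch q q s := by
          rw [he1]
          ring
  calc qPochInf t q * qPochInf q q *
        (∑' r : ℕ, q ^ (r * (N + 1)) / (qPoch t q r * qPoch q q r))
      = qPochInf q q *
          (∑' r : ℕ, qPochInf t q * (q ^ (r * (N + 1)) / (qPoch t q r * qPoch q q r))) := by
        rw [tsum_mul_left]
        ring
    _ = qPochInf q q * (∑' r : ℕ, ∑' s : ℕ, F (r, s)) := by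
        rw [tsum_congr hsplitF]
    _ = qPochInf q q * (∑' s : ℕ, ∑' r : ℕ, F (r, s)) := by
        have hcomm := Summable.tsum_comm (f := fun r s : ℕ => F (r, s)) hFsum
        rw [hcomm]
    _ = ∑' s : ℕ, qPochInf q q * (∑' r : ℕ, F (r, s)) := tsum_mul_left.symm
    _ = ∑' s : ℕ, (-1 : ℂ) ^ s * t ^ s * q ^ (s * (s - 1) / 2) * qPoch q q (N + s) / qPoch q q s :=
        tsum_congr hcol
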